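/- Suppose F is analytic on the open right half-plane ℂ₊ = {z : Re z > 0}, and for constants A, B, γ > 0 and a ≥ 0 one has |F(z)| ≤ B for all z ∈ ℂ₊, and |F(t)| ≤ A·e^{at}·e^{-γ/t} for all real t > 0. Then |F(z)| ≤ B·exp(-Re(γ/z)) for all z ∈ ℂ₊. -/

import Mathlib

set_option maxHeartbeats 1000000

open Filter Complex Set

private lemma inv_re_pos_aux {w : ℂ} (hw : 0 < w.re) : 0 < (w⁻¹).re := by
  rw [Complex.inv_re]
  exact div_pos hw (Complex.normSq_pos.mpr (fun h => by simp [h] at hw))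

/-- If `F` is analytic on the open right half-plane `ℂ₊ = {z : Re z > 0}`, bounded by `B`
on `ℂ₊`, and satisfies `|F(t)| ≤ A·e^{at}·e^{-γ/t}` on the positive real axis, then
`|F(z)| ≤ B·exp(-Re(γ/z))` on all of `ℂ₊`.  (The bound depends only on `B` and `γ`.) -/
theorem phragmen_lindelof_halfplane_gaussian
    (F : ℂ → ℂ) (A B γ a : ℝ)
    (hA : 0 < A) (hB : 0 < B) (hγ : 0 < γ) (ha : 0 ≤ a)
    (hF : DifferentiableOn ℂ F {z : ℂ | 0 < z.re})
    (hbound : ∀ z : ℂ, 0 < z.re → ‖F z‖ ≤ B)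
    (hreal : ∀ t : ℝ, 0 < t → ‖F t‖ ≤ A * Real.exp (a * t) * Real.exp (-γ / t)) :
    ∀ z : ℂ, 0 < z.re → ‖F z‖ ≤ B * Real.exp (-(((γ : ℂ) / z).re)) := by
  intro z hz
  have hz0 : z ≠ 0 := fun h => by simp [h] at hz
  have hw : 0 < (z⁻¹).re := inv_re_pos_aux hz
  -- rewrite the goal
  have hgoal : (((γ : ℂ) / z).re) = γ * (z⁻¹).re := by
    rw [div_eq_mul_inv, Complex.re_ofReal_mul]
  rw [hgoal]
  -- key estimate for each small δ
  have key : ∀ δ : ℝ, 0 < δ → δ ≤ (z⁻¹).re →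
      ‖F z‖ ≤ B * Real.exp (γ * δ) * Real.exp (-(γ * (z⁻¹).re)) := by
    intro δ hδ hδle
    set f : ℂ → ℂ := fun ζ => F ((ζ + (δ : ℂ))⁻¹) * Complex.exp ((γ : ℂ) * (ζ + (δ : ℂ))) with hf
    have hshift : ∀ ζ : ℂ, 0 ≤ ζ.re → 0 < (ζ + (δ : ℂ)).re := by
      intro ζ hζ
      simp only [Complex.add_re, Complex.ofReal_re]
      linarith
    -- differentiability
    have hd : DiffContOnCl ℂ f {ζ : ℂ | 0 < ζ.re} := by
      apply DifferentiableOn.diffContOnCl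
      rw [Complex.closure_setOf_lt_re]
      apply DifferentiableOn.mul
      · apply DifferentiableOn.comp hF
        · intro ζ hζ
          exact DifferentiableAt.differentiableWithinAt (by
            apply DifferentiableAt.inv
            · exact (differentiableAt_id.add_const _)
            · intro h
              have := hshift ζ hζ
              rw [h] at this; simp at this)
        · intro ζ hζ
          exact inv_re_pos_aux (hshift ζ hζ)
      · exact (Complex.differentiable_exp.comp
          ((differentiable_const _).mul (differentiable_id.add_const _))).differentiableOn
    -- norm formula
    have hnorm : ∀ ζ : ℂ, ‖f ζ‖ = ‖F ((ζ + (δ : ℂ))⁻¹)‖ * Real.exp (γ * (ζ.re + δ)) := by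
      intro ζ
      rw [hf]
      simp only [norm_mul, Complex.norm_exp, Complex.re_ofReal_mul,
        Complex.add_re, Complex.ofReal_re]
    -- growth condition
    have hexp : ∃ c < (2 : ℝ), ∃ B' : ℝ,
        f =O[Bornology.cobounded ℂ ⊓ Filter.principal {ζ : ℂ | 0 < ζ.re}]
          fun ζ => Real.exp (B' * ‖ζ‖ ^ c) := by
      refine ⟨1, by norm_num, γ, ?_⟩
      rw [Asymptotics.isBigO_iff]
      refine ⟨B * Real.exp (γ * δ), ?_⟩
      rw [Filter.eventually_inf_principal]
      filter_upwards with ζ hζ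
      have hζ' : (0 : ℝ) < ζ.re := hζ
      have h1 : ‖F ((ζ + (δ : ℂ))⁻¹)‖ ≤ B := hbound _ (inv_re_pos_aux (hshift ζ hζ'.le))
      rw [hnorm]
      have h2 : Real.exp (γ * (ζ.re + δ)) ≤ Real.exp (γ * δ) * Real.exp (γ * ‖ζ‖) := by
        rw [← Real.exp_add]
        apply Real.exp_le_exp.mpr
        have : ζ.re ≤ ‖ζ‖ := Complex.re_le_norm ζ
        nlinarith
      calc ‖F ((ζ + (δ : ℂ))⁻¹)‖ * Real.exp (γ * (ζ.re + δ))
          ≤ B * (Real.exp (γ * δ) * Real.exp (γ * ‖ζ‖)) := by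
            apply mul_le_mul h1 h2 (Real.exp_pos _).le hB.le
        _ = B * Real.exp (γ * δ) * ‖Real.exp (γ * ‖ζ‖ ^ (1 : ℝ))‖ := by
            rw [Real.norm_eq_abs, abs_of_pos (Real.exp_pos _), Real.rpow_one]; ring
    -- bounded on the real axis
    have hre : IsBoundedUnder (· ≤ ·) atTop fun x : ℝ => ‖f (x : ℂ)‖ := by
      refine ⟨A * Real.exp (a / δ), ?_⟩
      rw [Filter.eventually_map]
      filter_upwards [Filter.eventually_ge_atTop (0 : ℝ)] with x hx
      have hxδ : 0 < x + δ := by linarith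
      have ht : (0 : ℝ) < (x + δ)⁻¹ := inv_pos.mpr hxδ
      have hcast : ((x : ℂ) + (δ : ℂ))⁻¹ = (((x + δ)⁻¹ : ℝ) : ℂ) := by
        push_cast; ring
      rw [hnorm, hcast]
      have h1 := hreal _ ht
      have hdiv : -γ / (x + δ)⁻¹ = -(γ * (x + δ)) := by
        field_simp
      rw [hdiv] at h1
      calc ‖F (((x + δ)⁻¹ : ℝ) : ℂ)‖ * Real.exp (γ * (x + δ))
          ≤ A * Real.exp (a * (x + δ)⁻¹) * Real.exp (-(γ * (x + δ))) * Real.exp (γ * (x + δ)) := by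
            apply mul_le_mul_of_nonneg_right h1 (Real.exp_pos _).le
        _ = A * Real.exp (a * (x + δ)⁻¹) := by
            rw [mul_assoc, mul_assoc, ← Real.exp_add, ← Real.exp_add]
            norm_num
        _ ≤ A * Real.exp (a / δ) := by
            apply mul_le_mul_of_nonneg_left _ hA.le
            apply Real.exp_le_exp.mpr
            rw [div_eq_mul_inv]
            apply mul_le_mul_of_nonneg_left _ ha
            apply inv_anti₀ hδ
            linarith
    -- bound on the imaginary axis
    have him : ∀ y : ℝ, ‖f ((y : ℂ) * Complex.I)‖ ≤ B * Real.exp (γ * δ) := by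
      intro y
      have hre' : ((y : ℂ) * Complex.I).re = 0 := by simp
      have hpos : 0 < (((y : ℂ) * Complex.I) + (δ : ℂ)).re := hshift _ (le_of_eq hre'.symm)
      have h1 : ‖F ((((y : ℂ) * Complex.I) + (δ : ℂ))⁻¹)‖ ≤ B := hbound _ (inv_re_pos_aux hpos)
      rw [hnorm, hre', zero_add]
      exact mul_le_mul_of_nonneg_right h1 (Real.exp_pos _).le
    -- apply Phragmén–Lindelöf
    have hζ0 : (0 : ℝ) ≤ (z⁻¹ - (δ : ℂ)).re := by
      simp only [Complex.sub_re, Complex.ofReal_re]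
      linarith
    have hPL := PhragmenLindelof.right_half_plane_of_bounded_on_real hd hexp hre him hζ0
    -- compute f (z⁻¹ - δ)
    have hval : f (z⁻¹ - (δ : ℂ)) = F z * Complex.exp ((γ : ℂ) * z⁻¹) := by
      rw [hf]
      simp only [sub_add_cancel, inv_inv]
    rw [hval] at hPL
    have hnv : ‖F z * Complex.exp ((γ : ℂ) * z⁻¹)‖ = ‖F z‖ * Real.exp (γ * (z⁻¹).re) := by
      simp [Complex.norm_exp, Complex.re_ofReal_mul]
    rw [hnv] at hPL
    have := mul_le_mul_of_nonneg_right hPL (Real.exp_pos (-(γ * (z⁻¹).re))).le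
    calc ‖F z‖ = ‖F z‖ * Real.exp (γ * (z⁻¹).re) * Real.exp (-(γ * (z⁻¹).re)) := by
          rw [mul_assoc, ← Real.exp_add]; simp
      _ ≤ B * Real.exp (γ * δ) * Real.exp (-(γ * (z⁻¹).re)) := this
  -- take the limit δ → 0⁺
  have htend : Tendsto (fun δ : ℝ => B * Real.exp (γ * δ) * Real.exp (-(γ * (z⁻¹).re)))
      (nhdsWithin 0 (Set.Ioi 0)) (nhds (B * Real.exp (-(γ * (z⁻¹).re)))) := by
    have : Continuous (fun δ : ℝ => B * Real.exp (γ * δ) * Real.exp (-(γ * (z⁻¹).re))) := by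
      continuity
    have h0 := this.tendsto 0
    simp only [mul_zero, Real.exp_zero, mul_one] at h0
    exact h0.mono_left nhdsWithin_le_nhds
  refine ge_of_tendsto htend ?_
  filter_upwards [Ioo_mem_nhdsGT_of_mem (Set.mem_Ico.mpr ⟨le_rfl, hw⟩)] with δ hδ
  exact key δ hδ.1 hδ.2.le
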